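/- Let n ≥ 3, let B : ℝⁿ × ℝⁿ → ℝⁿ be a symmetric bilinear map, and let U : (0,∞) → ℝⁿ and λ : ℝⁿ∖{0} → ℝ be functions such that B(v,v) = |v|²·U(|v|) + λ(v)·v for every v ≠ 0 (Euclidean norm |·|). Then U is constant: U(s) = U(t) for all s, t > 0. -/
import Mathlib


/-- step (13.11)–(13.14) in the proof of Theorem 13.2. In dimension
`n ≥ 3`, if a symmetric bilinear map `B` on `ℝⁿ` decomposes as
`B(v,v) = |v|²·U(|v|) + λ(v)·v` for all `v ≠ 0`, then the spherically symmetric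
vector `U` is constant on `(0, ∞)`. -/
theorem stmt17 (n : ℕ) (hn : 3 ≤ n)
    (B : EuclideanSpace ℝ (Fin n) →ₗ[ℝ] EuclideanSpace ℝ (Fin n) →ₗ[ℝ] EuclideanSpace ℝ (Fin n))
    (hBsymm : ∀ v w : EuclideanSpace ℝ (Fin n), B v w = B w v)
    (U : ℝ → EuclideanSpace ℝ (Fin n)) (lam : EuclideanSpace ℝ (Fin n) → ℝ)
    (hB : ∀ v : EuclideanSpace ℝ (Fin n), v ≠ 0 →
      B v v = (‖v‖ ^ 2) • U ‖v‖ + lam v • v) :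
    ∀ s t : ℝ, 0 < s → 0 < t → U s = U t := by
  intro s t hs ht
  have key : ∀ v : EuclideanSpace ℝ (Fin n), v ≠ 0 → ‖v‖ = s →
      ∃ μ : ℝ, (t ^ 2) • U s - (t ^ 2) • U t = μ • v := by
    intro v hv hvs
    set c : ℝ := t / s with hc
    have hcpos : 0 < c := div_pos ht hs
    have hcv : (c • v : EuclideanSpace ℝ (Fin n)) ≠ 0 :=
      smul_ne_zero (ne_of_gt hcpos) hv
    have hnorm : ‖(c • v : EuclideanSpace ℝ (Fin n))‖ = t := by
      rw [norm_smul, hvs, Real.norm_eq_abs, abs_of_pos hcpos, hc]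
      field_simp
    have h1 := hB v hv
    have h2 := hB (c • v) hcv
    rw [hnorm] at h2
    have h3 : B (c • v) (c • v) = (c ^ 2) • B v v := by
      simp [map_smul, smul_smul, pow_two]
    rw [h3, h1, hvs] at h2
    have hc2 : c ^ 2 * s ^ 2 = t ^ 2 := by
      rw [hc]; field_simp
    rw [smul_add, smul_smul, hc2, smul_smul, smul_smul, mul_comm (lam (c • v)) c] at h2
    refine ⟨c * lam (c • v) - c ^ 2 * lam v, ?_⟩
    rw [sub_smul, sub_eq_sub_iff_add_eq_add, add_comm ((c * lam (c • v)) • v)]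
    exact h2
  have h0 : (0 : ℕ) < n := by omega
  have h1 : (1 : ℕ) < n := by omega
  set i0 : Fin n := ⟨0, h0⟩
  set i1 : Fin n := ⟨1, h1⟩
  set v : EuclideanSpace ℝ (Fin n) := EuclideanSpace.single i0 s with hvdef
  set w : EuclideanSpace ℝ (Fin n) := EuclideanSpace.single i1 s with hwdef
  have hvn : ‖v‖ = s := by
    rw [hvdef, EuclideanSpace.norm_single, Real.norm_eq_abs, abs_of_pos hs]
  have hwn : ‖w‖ = s := by
    rw [hwdef, EuclideanSpace.norm_single, Real.norm_eq_abs, abs_of_pos hs]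
  have hv0 : v ≠ 0 := by
    intro h; rw [h, norm_zero] at hvn; exact hs.ne hvn
  have hw0 : w ≠ 0 := by
    intro h; rw [h, norm_zero] at hwn; exact hs.ne hwn
  obtain ⟨μ, hμ⟩ := key v hv0 hvn
  obtain ⟨ν, hν⟩ := key w hw0 hwn
  have heq : μ • v = ν • w := hμ.symm.trans hν
  have hcoord := congr_arg (fun x : EuclideanSpace ℝ (Fin n) => x i0) heq
  have hne : i0 ≠ i1 := by simp [i0, i1, Fin.ext_iff]
  simp only [PiLp.smul_apply, hvdef, hwdef, EuclideanSpace.single_apply,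
    if_true, if_neg hne, smul_eq_mul, mul_zero] at hcoord
  have hμ0 : μ = 0 := by
    rcases mul_eq_zero.mp hcoord with h | h
    · exact h
    · exact absurd h hs.ne'
  rw [hμ0, zero_smul, sub_eq_zero] at hμ
  exact smul_right_injective (EuclideanSpace ℝ (Fin n)) (pow_ne_zero 2 ht.ne') hμ
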